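/- Let ψ^{-1} map a matching μ1 of the original school-choice instance to the matching μ2 of the JSA auxiliary instance defined, for each school c, by μ2(c') = max(μ1(c), >_c, q_c^G) and μ2(c'') = μ1(c) \ μ2(c'). Then μ1 is stable in the original instance under the joint-seat-allocation choice functions {C^JSA_c} if and only if ψ^{-1}(μ1) is stable in the JSA auxiliary instance. -/

import Mathlib

/-!
Common formalization of school-choice instances with reserved seats
(minority reserve, joint seat allocation, discovery program).

Conventions:
* `prio c s` is the priority rank of student `s` at school `c`
  (smaller value = higher priority); injectivity encodes a strict priority order.
* `pref s o` is the preference rank of outcome `o : Option C` for student `s`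
  (smaller value = more preferred); `none` denotes being unmatched, and a school
  `c` is acceptable to `s` iff `pref s (some c) < pref s none`.
-/

open Finset

structure SchoolChoice (S C : Type*) [Fintype S] [DecidableEq S] [Fintype C] [DecidableEq C] where
  /-- the set of disadvantaged (minority) students; the rest are advantaged -/
  dis : Finset S
  /-- preference rank of each outcome (school or `none` = unmatched) for each student -/
  pref : S → Option C → ℕ
  pref_inj : ∀ s, Function.Injective (pref s)
  /-- priority rank of each student at each school (lower = higher priority) -/
  prio : C → S → ℕ
  prio_inj : ∀ c, Function.Injective (prio c)
  /-- quota of each school -/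
  q : C → ℕ
  /-- reservation quota of each school -/
  qR : C → ℕ
  qR_le : ∀ c, qR c ≤ q c

namespace SchoolChoice

variable {S C : Type*} [Fintype S] [DecidableEq S] [Fintype C] [DecidableEq C]

/-- `max(T, >_c, k)`: the `min(k, |T|)` highest-priority students of `T` at school `c`. -/
def maxSet (I : SchoolChoice S C) (c : C) (T : Finset S) (k : ℕ) : Finset S :=
  T.filter fun s => (T.filter fun t => I.prio c t < I.prio c s).card < k

/-- baseline choice function `C^BASE_c` -/
def CBASE (I : SchoolChoice S C) (c : C) (T : Finset S) : Finset S :=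
  I.maxSet c T (I.q c)

/-- `S1^R` of the minority-reserve choice function -/
def mrRes (I : SchoolChoice S C) (c : C) (T : Finset S) : Finset S :=
  I.maxSet c (T ∩ I.dis) (I.qR c)

/-- minority-reserve choice function `C^MR_c` -/
def CMR (I : SchoolChoice S C) (c : C) (T : Finset S) : Finset S :=
  I.mrRes c T ∪ I.maxSet c (T \ I.mrRes c T) (I.q c - (I.mrRes c T).card)

/-- `S1^G` of the joint-seat-allocation choice function -/
def jsaGen (I : SchoolChoice S C) (c : C) (T : Finset S) : Finset S :=
  I.maxSet c T (I.q c - I.qR c)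

/-- `S1^R` of the joint-seat-allocation choice function -/
def jsaRes (I : SchoolChoice S C) (c : C) (T : Finset S) : Finset S :=
  I.maxSet c ((T ∩ I.dis) \ I.jsaGen c T) (I.qR c)

/-- joint-seat-allocation choice function `C^JSA_c` -/
def CJSA (I : SchoolChoice S C) (c : C) (T : Finset S) : Finset S :=
  I.jsaGen c T ∪ I.jsaRes c T ∪
    I.maxSet c (T \ (I.jsaGen c T ∪ I.jsaRes c T))
      (I.q c - (I.jsaGen c T ∪ I.jsaRes c T).card)

/-- school `c` is acceptable to student `s` -/
def acceptable (I : SchoolChoice S C) (s : S) (c : C) : Prop :=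
  I.pref s (some c) < I.pref s none

/-- `μ(c)`: the set of students assigned to school `c` by `μ` -/
def assigned (I : SchoolChoice S C) (μ : S → Option C) (c : C) : Finset S :=
  Finset.univ.filter fun s => μ s = some c

/-- `μ` is a matching: students are assigned only acceptable schools, quotas respected -/
def IsMatching (I : SchoolChoice S C) (μ : S → Option C) : Prop :=
  (∀ s c, μ s = some c → I.acceptable s c) ∧ ∀ c, (I.assigned μ c).card ≤ I.q c

/-- `μ` is stable w.r.t. the choice functions `Ch`: it is a matching and no pair
`(s, c)` with `c` acceptable to `s` satisfies `c >_s μ(s)` and `s ∈ Ch c (μ(c) ∪ {s})`. -/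
def IsStable (I : SchoolChoice S C) (Ch : C → Finset S → Finset S) (μ : S → Option C) : Prop :=
  I.IsMatching μ ∧
    ∀ s c, I.acceptable s c → I.pref s (some c) < I.pref s (μ s) →
      s ∉ Ch c (insert s (I.assigned μ c))

/-- `μ` is the student-optimal stable matching w.r.t. `Ch`:
stable and weakly preferred by every student to every stable matching. -/
def IsOptStable (I : SchoolChoice S C) (Ch : C → Finset S → Finset S) (μ : S → Option C) :
    Prop :=
  I.IsStable Ch μ ∧ ∀ μ', I.IsStable Ch μ' → ∀ s, I.pref s (μ s) ≤ I.pref s (μ' s)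

/-! Restricted (sub)instances, used by the three-stage discovery program: only students
in `A` participate and school `c` has quota `q' c`, with baseline (responsive) choice
functions. -/

def IsMatchingOn (I : SchoolChoice S C) (A : Finset S) (q' : C → ℕ) (μ : S → Option C) :
    Prop :=
  (∀ s, s ∉ A → μ s = none) ∧
    (∀ s c, μ s = some c → I.acceptable s c) ∧ ∀ c, (I.assigned μ c).card ≤ q' c

def IsStableOn (I : SchoolChoice S C) (A : Finset S) (q' : C → ℕ) (μ : S → Option C) : Prop :=
  I.IsMatchingOn A q' μ ∧
    ∀ s ∈ A, ∀ c : C, I.acceptable s c → I.pref s (some c) < I.pref s (μ s) →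
      s ∉ I.maxSet c (insert s (I.assigned μ c)) (q' c)

def IsOptStableOn (I : SchoolChoice S C) (A : Finset S) (q' : C → ℕ) (μ : S → Option C) :
    Prop :=
  I.IsStableOn A q' μ ∧
    ∀ μ', I.IsStableOn A q' μ' → ∀ s ∈ A, I.pref s (μ s) ≤ I.pref s (μ' s)

/-- `μ` is the discovery-program matching: the union of the three stage matchings
`μ1` (general seats, all students), `μ2` (reserved seats, unmatched disadvantaged
students), `μ3` (vacant reserved seats, unmatched advantaged students). -/
def IsDisc (I : SchoolChoice S C) (μ : S → Option C) : Prop :=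
  ∃ μ1 μ2 μ3 : S → Option C,
    I.IsOptStableOn Finset.univ (fun c => I.q c - I.qR c) μ1 ∧
    I.IsOptStableOn (I.dis.filter fun s => μ1 s = none) I.qR μ2 ∧
    I.IsOptStableOn ((Finset.univ \ I.dis).filter fun s => μ1 s = none)
      (fun c => I.qR c - (I.assigned μ2 c).card) μ3 ∧
    ∀ s, μ s = Option.elim (μ1 s) (Option.elim (μ2 s) (μ3 s) some) some

/-- `(s, c)` is a blocking pair of `μ` for disadvantaged students -/
def BlockDis (I : SchoolChoice S C) (μ : S → Option C) (s : S) (c : C) : Prop :=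
  s ∈ I.dis ∧ I.acceptable s c ∧ I.pref s (some c) < I.pref s (μ s) ∧
    ∃ s' ∈ I.assigned μ c, s' ∈ I.dis ∧ I.prio c s < I.prio c s'

/-- `(s, c)` is a blocking pair of `μ` for advantaged students -/
def BlockAdv (I : SchoolChoice S C) (μ : S → Option C) (s : S) (c : C) : Prop :=
  s ∉ I.dis ∧ I.acceptable s c ∧ I.pref s (some c) < I.pref s (μ s) ∧
    ∃ s' ∈ I.assigned μ c, s' ∉ I.dis ∧ I.prio c s < I.prio c s'

/-- `(s, c)` is an in-group blocking pair of `μ` -/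
def InGroupBlock (I : SchoolChoice S C) (μ : S → Option C) (s : S) (c : C) : Prop :=
  I.BlockDis μ s c ∨ I.BlockAdv μ s c

/-- all schools share a common priority order over the students -/
def CommonPriority (I : SchoolChoice S C) : Prop :=
  ∀ c c' : C, ∀ t u : S, I.prio c t < I.prio c u ↔ I.prio c' t < I.prio c' u

/-- the reservation quotas are a smart reserve w.r.t. the baseline matching `μBase` -/
def SmartReserve (I : SchoolChoice S C) (μBase : S → Option C) : Prop :=
  ∀ c, (I.assigned μBase c ∩ I.dis).card ≤ I.qR c

end SchoolChoice
namespace SchoolChoice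

variable {S C : Type*} [Fintype S] [DecidableEq S] [Fintype C] [DecidableEq C]

/-! Auxiliary instances: each school `c` is split into `Sum.inl c = c'` (general seats,
quota `q c - qR c`, priority `>_c`) and `Sum.inr c = c''` (reserved seats, quota `qR c`,
priority ranking all disadvantaged students above all advantaged students and each group
by `>_c`). The projection `ω` is `Sum.elim id id`. -/

/-- priority ranks of the auxiliary schools -/
def prioAux (I : SchoolChoice S C) : C ⊕ C → S → ℕ
  | Sum.inl c => I.prio c
  | Sum.inr c => fun t =>
      if t ∈ I.dis then I.prio c t else Finset.univ.sup (I.prio c) + 1 + I.prio c t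

theorem prioAux_inj (I : SchoolChoice S C) (d : C ⊕ C) :
    Function.Injective (I.prioAux d) := by
  cases d with
  | inl c => exact I.prio_inj c
  | inr c =>
    intro t u h
    simp only [prioAux] at h
    have ht := Finset.le_sup (f := I.prio c) (Finset.mem_univ t)
    have hu := Finset.le_sup (f := I.prio c) (Finset.mem_univ u)
    split_ifs at h
    · exact I.prio_inj c h
    · exact absurd h (by omega)
    · exact absurd h (by omega)
    · exact I.prio_inj c (by omega)

/-- JSA auxiliary preferences: `c1' > c1'' > c2' > c2'' > ⋯` -/
def prefJSAAux (I : SchoolChoice S C) (s : S) : Option (C ⊕ C) → ℕ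
  | none => 2 * I.pref s none
  | some (Sum.inl c) => 2 * I.pref s (some c)
  | some (Sum.inr c) => 2 * I.pref s (some c) + 1

theorem prefJSAAux_inj (I : SchoolChoice S C) (s : S) :
    Function.Injective (I.prefJSAAux s) := by
  intro o1 o2 h
  rcases o1 with _ | (c1 | c1) <;> rcases o2 with _ | (c2 | c2) <;>
    simp only [prefJSAAux] at h
  · rfl
  · exact absurd
      (I.pref_inj s (show I.pref s none = I.pref s (some c2) by omega)) (by simp)
  · exact absurd h (by omega)
  · exact absurd
      (I.pref_inj s (show I.pref s (some c1) = I.pref s none by omega)) (by simp)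
  · rw [Option.some.inj
      (I.pref_inj s (show I.pref s (some c1) = I.pref s (some c2) by omega))]
  · exact absurd h (by omega)
  · exact absurd h (by omega)
  · exact absurd h (by omega)
  · rw [Option.some.inj
      (I.pref_inj s (show I.pref s (some c1) = I.pref s (some c2) by omega))]

/-- a bound strictly larger than all preference ranks of student `s` -/
def prefB (I : SchoolChoice S C) (s : S) : ℕ := Finset.univ.sup (I.pref s) + 1

/-- DISC auxiliary preferences: `c1' > ⋯ > ck' > c1'' > ⋯ > ck''`
(acceptable general copies first, then acceptable reserved copies, then being
unmatched, then the copies of unacceptable schools). -/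
def prefDISCAux (I : SchoolChoice S C) (s : S) : Option (C ⊕ C) → ℕ
  | none => 2 * I.prefB s
  | some (Sum.inl c) =>
      if I.pref s (some c) < I.pref s none then I.pref s (some c)
      else 2 * I.prefB s + 1 + I.pref s (some c)
  | some (Sum.inr c) =>
      if I.pref s (some c) < I.pref s none then I.prefB s + I.pref s (some c)
      else 3 * I.prefB s + 1 + I.pref s (some c)

theorem prefDISCAux_inj (I : SchoolChoice S C) (s : S) :
    Function.Injective (I.prefDISCAux s) := by
  have hb : ∀ o : Option C, I.pref s o < I.prefB s := by
    intro o
    have := Finset.le_sup (f := I.pref s) (Finset.mem_univ o)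
    simp only [prefB]
    omega
  intro o1 o2 h
  have hn := hb none
  rcases o1 with _ | (c1 | c1) <;> rcases o2 with _ | (c2 | c2) <;>
    simp only [prefDISCAux] at h <;> try split_ifs at h
  all_goals try rfl
  all_goals
    first
    | exact absurd h (by first
        | (have := hb (some c1); have := hb (some c2); omega)
        | (have := hb (some c1); omega)
        | (have := hb (some c2); omega))
    | rw [Option.some.inj (I.pref_inj s
        (show I.pref s (some c1) = I.pref s (some c2) by
          have := hb (some c1); have := hb (some c2); omega))]

/-- the JSA auxiliary instance -/
def jsaAux (I : SchoolChoice S C) : SchoolChoice S (C ⊕ C) where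
  dis := I.dis
  pref := I.prefJSAAux
  pref_inj := I.prefJSAAux_inj
  prio := I.prioAux
  prio_inj := I.prioAux_inj
  q := Sum.elim (fun c => I.q c - I.qR c) I.qR
  qR := fun _ => 0
  qR_le := fun _ => Nat.zero_le _

/-- the DISC auxiliary instance -/
def discAux (I : SchoolChoice S C) : SchoolChoice S (C ⊕ C) :=
  { I.jsaAux with pref := I.prefDISCAux, pref_inj := I.prefDISCAux_inj }

/-- `ψ⁻¹`: transform a matching of the original instance into a matching of the
JSA auxiliary instance: `μ2(c') = max(μ1(c), >_c, q_c^G)`, `μ2(c'') = μ1(c) \ μ2(c')`. -/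
def psiInv (I : SchoolChoice S C) (μ : S → Option C) (s : S) : Option (C ⊕ C) :=
  match μ s with
  | none => none
  | some c =>
      if s ∈ I.maxSet c (I.assigned μ c) (I.q c - I.qR c) then some (Sum.inl c)
      else some (Sum.inr c)

end SchoolChoice

namespace SchoolChoice

variable {S C : Type*} [Fintype S] [DecidableEq S] [Fintype C] [DecidableEq C]

lemma mem_maxSet {I : SchoolChoice S C} {c : C} {T : Finset S} {k : ℕ} {s : S} :
    s ∈ I.maxSet c T k ↔ s ∈ T ∧ (T.filter fun t => I.prio c t < I.prio c s).card < k := by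
  simp [maxSet]

lemma maxSet_subset (I : SchoolChoice S C) (c : C) (T : Finset S) (k : ℕ) :
    I.maxSet c T k ⊆ T := Finset.filter_subset _ _

lemma maxSet_eq_self {I : SchoolChoice S C} {c : C} {T : Finset S} {k : ℕ}
    (h : T.card ≤ k) : I.maxSet c T k = T := by
  apply Finset.filter_true_of_mem
  intro t ht
  calc (T.filter fun x => I.prio c x < I.prio c t).card
      ≤ (T.erase t).card := by
        apply Finset.card_le_card
        intro x hx
        rw [Finset.mem_filter] at hx
        exact Finset.mem_erase.mpr ⟨fun he => by simp [he] at hx, hx.1⟩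
    _ < T.card := Finset.card_erase_lt_of_mem ht
    _ ≤ k := h

lemma maxSet_zero (I : SchoolChoice S C) (c : C) (T : Finset S) :
    I.maxSet c T 0 = ∅ := by
  simp [maxSet]

lemma card_maxSet (I : SchoolChoice S C) (c : C) (T : Finset S) (k : ℕ) :
    (I.maxSet c T k).card = min k T.card := by
  set f : S → ℕ := fun t => (T.filter fun x => I.prio c x < I.prio c t).card with hf
  have hmono : ∀ t ∈ T, ∀ u : S, I.prio c t < I.prio c u → f t < f u := by
    intro t ht u h
    apply Finset.card_lt_card
    rw [Finset.ssubset_iff_of_subset]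
    · exact ⟨t, Finset.mem_filter.mpr ⟨ht, h⟩, fun hc => by
        simp [Finset.mem_filter] at hc⟩
    · intro x hx
      rw [Finset.mem_filter] at hx ⊢
      exact ⟨hx.1, hx.2.trans h⟩
  have hinj : Set.InjOn f T := by
    intro t ht u hu h
    by_contra hne
    rcases lt_or_gt_of_ne (fun he => hne (I.prio_inj c he) : I.prio c t ≠ I.prio c u) with hlt | hlt
    · exact absurd h (Nat.ne_of_lt (hmono t ht u hlt))
    · exact absurd h.symm (Nat.ne_of_lt (hmono u hu t hlt))
  have himg : T.image f = Finset.range T.card := by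
    apply Finset.eq_of_subset_of_card_le
    · intro n hn
      rw [Finset.mem_image] at hn
      obtain ⟨t, ht, rfl⟩ := hn
      rw [Finset.mem_range]
      calc f t ≤ (T.erase t).card := by
            apply Finset.card_le_card
            intro x hx
            rw [Finset.mem_filter] at hx
            exact Finset.mem_erase.mpr ⟨fun he => by simp [he] at hx, hx.1⟩
        _ < T.card := Finset.card_erase_lt_of_mem ht
    · rw [Finset.card_range, Finset.card_image_of_injOn hinj]
  have : I.maxSet c T k = T.filter fun t => f t < k := rfl
  rw [this]
  have h2 : ((T.filter fun t => f t < k).image f) = (T.image f).filter (· < k) := by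
    rw [Finset.filter_image]
  have h3 : ((T.filter fun t => f t < k)).card = ((T.filter fun t => f t < k).image f).card := by
    rw [Finset.card_image_of_injOn (hinj.mono (by
      intro x hx; exact Finset.mem_coe.mpr (Finset.filter_subset _ _ (Finset.mem_coe.mp hx))))]
  rw [h3, h2, himg]
  have : (Finset.range T.card).filter (· < k) = Finset.range (min k T.card) := by
    ext n; simp [Finset.mem_range]; omega
  rw [this, Finset.card_range]

lemma maxSet_subset_beaters {I : SchoolChoice S C} {c : C} {T : Finset S} {k : ℕ} {s : S}
    (h : k ≤ (T.filter fun t => I.prio c t < I.prio c s).card) :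
    I.maxSet c T k ⊆ T.filter fun t => I.prio c t < I.prio c s := by
  intro t ht
  rw [mem_maxSet] at ht
  rw [Finset.mem_filter]
  refine ⟨ht.1, ?_⟩
  by_contra hn
  push_neg at hn
  have hsub : (T.filter fun x => I.prio c x < I.prio c s)
      ⊆ T.filter fun x => I.prio c x < I.prio c t := by
    intro x hx
    rw [Finset.mem_filter] at hx ⊢
    exact ⟨hx.1, lt_of_lt_of_le hx.2 hn⟩
  have := Finset.card_le_card hsub
  omega

lemma beaters_maxSet_card {I : SchoolChoice S C} {c : C} {T : Finset S} {k : ℕ} {s : S}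
    (h : k ≤ (T.filter fun t => I.prio c t < I.prio c s).card) :
    ((I.maxSet c T k).filter fun t => I.prio c t < I.prio c s).card = k := by
  rw [Finset.filter_true_of_mem
    (fun t ht => (Finset.mem_filter.mp (maxSet_subset_beaters h ht)).2)]
  rw [card_maxSet]
  have h2 : (T.filter fun t => I.prio c t < I.prio c s).card ≤ T.card :=
    Finset.card_le_card (Finset.filter_subset _ _)
  omega

lemma maxSet_insert_eq {I : SchoolChoice S C} {c : C} {T : Finset S} {k : ℕ} {s : S}
    (h : k ≤ (T.filter fun t => I.prio c t < I.prio c s).card) :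
    I.maxSet c (insert s T) k = I.maxSet c T k := by
  by_cases hsT : s ∈ T
  · rw [Finset.insert_eq_self.mpr hsT]
  ext t
  rw [mem_maxSet, mem_maxSet, Finset.mem_insert]
  constructor
  · rintro ⟨rfl | ht, hcard⟩
    · exfalso
      rw [Finset.filter_insert, if_neg (lt_irrefl _)] at hcard
      omega
    · refine ⟨ht, lt_of_le_of_lt ?_ hcard⟩
      exact Finset.card_le_card
        (Finset.filter_subset_filter _ (Finset.subset_insert _ _))
  · rintro ⟨ht, hcard⟩
    refine ⟨Or.inr ht, ?_⟩
    rw [Finset.filter_insert, if_neg ?_]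
    · exact hcard
    · intro hst
      have hsub : (T.filter fun x => I.prio c x < I.prio c s)
          ⊆ T.filter fun x => I.prio c x < I.prio c t := by
        intro x hx
        rw [Finset.mem_filter] at hx ⊢
        exact ⟨hx.1, hx.2.trans hst⟩
      have := Finset.card_le_card hsub
      omega

lemma not_mem_maxSet_insert_self {I : SchoolChoice S C} {c : C} {T : Finset S} {k : ℕ}
    {s : S} (hsT : s ∈ T) (hns : s ∉ I.maxSet c T k) :
    s ∉ I.maxSet c (insert s (I.maxSet c T k)) k := by
  have hb : k ≤ (T.filter fun t => I.prio c t < I.prio c s).card := by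
    rw [mem_maxSet] at hns
    push_neg at hns
    exact hns hsT
  rw [mem_maxSet]
  push_neg
  intro _
  rw [Finset.filter_insert, if_neg (lt_irrefl _), beaters_maxSet_card hb]

lemma mem_assigned {I : SchoolChoice S C} {μ : S → Option C} {c : C} {s : S} :
    s ∈ I.assigned μ c ↔ μ s = some c := by simp [assigned]

lemma psiInv_none {I : SchoolChoice S C} {μ : S → Option C} {s : S} (h : μ s = none) :
    I.psiInv μ s = none := by simp [psiInv, h]

lemma psiInv_some {I : SchoolChoice S C} {μ : S → Option C} {s : S} {c : C}
    (h : μ s = some c) :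
    I.psiInv μ s = if s ∈ I.maxSet c (I.assigned μ c) (I.q c - I.qR c)
      then some (Sum.inl c) else some (Sum.inr c) := by simp [psiInv, h]

lemma assigned_psiInv_inl (I : SchoolChoice S C) (μ1 : S → Option C) (c : C) :
    I.jsaAux.assigned (I.psiInv μ1) (Sum.inl c)
      = I.maxSet c (I.assigned μ1 c) (I.q c - I.qR c) := by
  ext s
  rw [mem_assigned]
  rcases hμ : μ1 s with _ | c0
  · rw [psiInv_none hμ]
    simp only [reduceCtorEq, false_iff]
    intro h
    have := mem_assigned.mp (maxSet_subset _ _ _ _ h)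
    rw [hμ] at this
    exact absurd this (by simp)
  · rw [psiInv_some hμ]
    by_cases hmem : s ∈ I.maxSet c0 (I.assigned μ1 c0) (I.q c0 - I.qR c0)
    · rw [if_pos hmem]
      constructor
      · intro h
        obtain rfl : c0 = c := by
          injection h with h
          exact Sum.inl.inj h
        exact hmem
      · intro h
        obtain rfl : c0 = c := by
          have := mem_assigned.mp (maxSet_subset _ _ _ _ h)
          rw [hμ] at this
          exact Option.some.inj this
        rfl
    · rw [if_neg hmem]
      constructor
      · intro h
        exact absurd (Option.some.inj h) (by simp)
      · intro h
        obtain rfl : c0 = c := by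
          have := mem_assigned.mp (maxSet_subset _ _ _ _ h)
          rw [hμ] at this
          exact Option.some.inj this
        exact absurd h hmem

lemma assigned_psiInv_inr (I : SchoolChoice S C) (μ1 : S → Option C) (c : C) :
    I.jsaAux.assigned (I.psiInv μ1) (Sum.inr c)
      = I.assigned μ1 c \ I.maxSet c (I.assigned μ1 c) (I.q c - I.qR c) := by
  ext s
  rw [mem_assigned, Finset.mem_sdiff, mem_assigned]
  rcases hμ : μ1 s with _ | c0
  · rw [psiInv_none hμ]
    simp
  · rw [psiInv_some hμ]
    by_cases hc : c0 = c
    · subst hc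
      by_cases hmem : s ∈ I.maxSet c0 (I.assigned μ1 c0) (I.q c0 - I.qR c0)
      · rw [if_pos hmem]
        simp [hmem]
      · rw [if_neg hmem]
        simp [hmem]
    · by_cases hmem : s ∈ I.maxSet c0 (I.assigned μ1 c0) (I.q c0 - I.qR c0)
      · rw [if_pos hmem]
        simp [hc]
      · rw [if_neg hmem]
        simp [hc]

lemma prioAux_inr_lt_dis {I : SchoolChoice S C} {c : C} {s t : S} (hs : s ∈ I.dis) :
    I.prioAux (Sum.inr c) t < I.prioAux (Sum.inr c) s
      ↔ t ∈ I.dis ∧ I.prio c t < I.prio c s := by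
  have hss := Finset.le_sup (f := I.prio c) (Finset.mem_univ s)
  simp only [prioAux, if_pos hs]
  by_cases htd : t ∈ I.dis
  · rw [if_pos htd]
    simp [htd]
  · rw [if_neg htd]
    simp only [htd, false_and, iff_false]
    omega

lemma prioAux_inr_lt_notdis {I : SchoolChoice S C} {c : C} {s t : S} (hs : s ∉ I.dis) :
    I.prioAux (Sum.inr c) t < I.prioAux (Sum.inr c) s
      ↔ t ∈ I.dis ∨ I.prio c t < I.prio c s := by
  have hst := Finset.le_sup (f := I.prio c) (Finset.mem_univ t)
  simp only [prioAux, if_neg hs]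
  by_cases htd : t ∈ I.dis
  · rw [if_pos htd]
    simp only [htd, true_or, iff_true]
    omega
  · rw [if_neg htd]
    simp only [htd, false_or]
    omega

lemma card_filter_aux_notdis (I : SchoolChoice S C) (c : C) {L : Finset S} {s : S}
    (hs : s ∉ I.dis) :
    (L.filter fun t => I.prioAux (Sum.inr c) t < I.prioAux (Sum.inr c) s).card
      = (L.filter fun t => t ∈ I.dis).card
        + ((L.filter fun t => t ∉ I.dis).filter fun t => I.prio c t < I.prio c s).card := by
  rw [← Finset.card_union_of_disjoint (by
    rw [Finset.disjoint_left]
    intro x hx hx2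
    rw [Finset.mem_filter] at hx
    rw [Finset.mem_filter, Finset.mem_filter] at hx2
    exact hx2.1.2 hx.2)]
  congr 1
  ext t
  simp only [Finset.mem_union, Finset.mem_filter, prioAux_inr_lt_notdis hs]
  tauto

lemma blocking_equiv (I : SchoolChoice S C) (μ1 : S → Option C) (hm : I.IsMatching μ1)
    {s : S} {c : C} (hsT : s ∉ I.assigned μ1 c) :
    s ∈ I.CJSA c (insert s (I.assigned μ1 c)) ↔
      (s ∈ I.jsaAux.CBASE (Sum.inl c)
          (insert s (I.jsaAux.assigned (I.psiInv μ1) (Sum.inl c))) ∨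
        s ∈ I.jsaAux.CBASE (Sum.inr c)
          (insert s (I.jsaAux.assigned (I.psiInv μ1) (Sum.inr c)))) := by
  have hTq : (I.assigned μ1 c).card ≤ I.q c := hm.2 c
  have hqq : I.qR c ≤ I.q c := I.qR_le c
  rw [assigned_psiInv_inl, assigned_psiInv_inr]
  set T := I.assigned μ1 c with hTdef
  set qG := I.q c - I.qR c with hqGdef
  set G := I.maxSet c T qG with hGdef
  set b := (T.filter fun t => I.prio c t < I.prio c s).card with hbdef
  have hbT : b ≤ T.card := Finset.card_le_card (Finset.filter_subset _ _)
  have hsG : s ∉ G := fun h => hsT (maxSet_subset _ _ _ _ h)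
  have hinl : s ∈ I.jsaAux.CBASE (Sum.inl c) (insert s G) ↔ b < qG := by
    have h1 : I.jsaAux.CBASE (Sum.inl c) (insert s G) = I.maxSet c (insert s G) qG := rfl
    rw [h1, mem_maxSet, Finset.filter_insert, if_neg (lt_irrefl _)]
    simp only [Finset.mem_insert_self, true_and]
    constructor
    · intro h
      by_contra hn
      push_neg at hn
      rw [hGdef, beaters_maxSet_card hn] at h
      omega
    · intro h
      have hle : (G.filter fun t => I.prio c t < I.prio c s).card ≤ b :=
        Finset.card_le_card (Finset.filter_subset_filter _ (maxSet_subset _ _ _ _))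
      omega
  set a := ((T \ G).filter fun t => I.prioAux (Sum.inr c) t < I.prioAux (Sum.inr c) s).card
    with hadef
  have hinr : s ∈ I.jsaAux.CBASE (Sum.inr c) (insert s (T \ G)) ↔ a < I.qR c := by
    have h1 : I.jsaAux.CBASE (Sum.inr c) (insert s (T \ G))
        = I.jsaAux.maxSet (Sum.inr c) (insert s (T \ G)) (I.qR c) := rfl
    have h2 : I.jsaAux.maxSet (Sum.inr c) (insert s (T \ G)) (I.qR c)
        = (insert s (T \ G)).filter fun x =>
            ((insert s (T \ G)).filter fun t =>
              I.prioAux (Sum.inr c) t < I.prioAux (Sum.inr c) x).card < I.qR c := rfl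
    rw [h1, h2, Finset.mem_filter, Finset.filter_insert, if_neg (lt_irrefl _)]
    simp only [Finset.mem_insert_self, true_and]
    exact Iff.rfl
  rw [hinl, hinr]
  by_cases hb : b < qG
  · simp only [hb, true_or, iff_true]
    have hmem : s ∈ I.jsaGen c (insert s T) := by
      rw [jsaGen, mem_maxSet, Finset.filter_insert, if_neg (lt_irrefl _)]
      exact ⟨Finset.mem_insert_self _ _, hb⟩
    simp only [CJSA, Finset.mem_union]
    exact Or.inl (Or.inl hmem)
  · push_neg at hb
    have hG' : I.jsaGen c (insert s T) = G := by
      rw [jsaGen, maxSet_insert_eq hb, hGdef]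
    have hGcard : G.card = qG := by
      rw [hGdef, card_maxSet]
      omega
    by_cases hsd : s ∈ I.dis
    · -- s disadvantaged
      set D0 := (T \ G).filter (fun t => t ∈ I.dis) with hD0def
      have hbase : ((insert s T) ∩ I.dis) \ G = insert s D0 := by
        ext t
        simp only [Finset.mem_sdiff, Finset.mem_inter, Finset.mem_insert, hD0def,
          Finset.mem_filter]
        constructor
        · rintro ⟨⟨h1 | h1, h2⟩, h3⟩
          · exact Or.inl h1
          · exact Or.inr ⟨⟨h1, h3⟩, h2⟩
        · rintro (rfl | ⟨⟨h1, h3⟩, h2⟩)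
          · exact ⟨⟨Or.inl rfl, hsd⟩, hsG⟩
          · exact ⟨⟨Or.inr h1, h2⟩, h3⟩
      have hres : I.jsaRes c (insert s T) = I.maxSet c (insert s D0) (I.qR c) := by
        rw [jsaRes, hG', hbase]
      have ha2 : a = (D0.filter fun t => I.prio c t < I.prio c s).card := by
        rw [hadef]
        congr 1
        ext t
        simp only [Finset.mem_filter, hD0def, prioAux_inr_lt_dis hsd]
        exact and_assoc.symm
      simp only [CJSA, Finset.mem_union, hG', hres]
      by_cases haq : a < I.qR c
      · simp only [haq, or_true, iff_true]
        refine Or.inl (Or.inr ?_)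
        rw [mem_maxSet, Finset.filter_insert, if_neg (lt_irrefl _)]
        refine ⟨Finset.mem_insert_self _ _, ?_⟩
        rw [← ha2]
        exact haq
      · push_neg at haq
        refine iff_of_false ?_ (by omega)
        have hR' : I.maxSet c (insert s D0) (I.qR c) = I.maxSet c D0 (I.qR c) :=
          maxSet_insert_eq (ha2 ▸ haq)
        have haD0 : (D0.filter fun t => I.prio c t < I.prio c s).card ≤ D0.card :=
          Finset.card_le_card (Finset.filter_subset _ _)
        have hcardR : (I.maxSet c D0 (I.qR c)).card = I.qR c := by
          rw [card_maxSet]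
          omega
        have hdisj : Disjoint G (I.maxSet c D0 (I.qR c)) := by
          rw [Finset.disjoint_left]
          intro x hxG hxR
          have := maxSet_subset _ _ _ _ hxR
          rw [hD0def, Finset.mem_filter, Finset.mem_sdiff] at this
          exact this.1.2 hxG
        have hq0 : I.q c - (G ∪ I.maxSet c D0 (I.qR c)).card = 0 := by
          rw [Finset.card_union_of_disjoint hdisj, hGcard, hcardR]
          omega
        rintro ((h | h) | h)
        · exact hsG h
        · rw [mem_maxSet, Finset.filter_insert, if_neg (lt_irrefl _)] at h
          rw [← ha2] at h
          omega
        · rw [hR', hq0, maxSet_zero] at h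
          exact absurd h (Finset.notMem_empty s)
    · -- s advantaged
      set D0 := (T \ G).filter (fun t => t ∈ I.dis) with hD0def
      have hbase : ((insert s T) ∩ I.dis) \ G = D0 := by
        ext t
        simp only [Finset.mem_sdiff, Finset.mem_inter, Finset.mem_insert, hD0def,
          Finset.mem_filter]
        constructor
        · rintro ⟨⟨h1 | h1, h2⟩, h3⟩
          · exact absurd (h1 ▸ h2) hsd
          · exact ⟨⟨h1, h3⟩, h2⟩
        · rintro ⟨⟨h1, h3⟩, h2⟩
          exact ⟨⟨Or.inr h1, h2⟩, h3⟩
      have hres : I.jsaRes c (insert s T) = I.maxSet c D0 (I.qR c) := by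
        rw [jsaRes, hG', hbase]
      have ha2 : a = D0.card
          + (((T \ G).filter fun t => t ∉ I.dis).filter fun t =>
              I.prio c t < I.prio c s).card := by
        rw [hadef, card_filter_aux_notdis I c hsd]
      have hsD0 : s ∉ D0 := fun h => hsd (Finset.mem_filter.mp h).2
      have hsR' : s ∉ I.maxSet c D0 (I.qR c) := fun h => hsD0 (maxSet_subset _ _ _ _ h)
      have hdisjD : Disjoint G D0 := by
        rw [Finset.disjoint_left]
        intro x hxG hxD
        rw [hD0def, Finset.mem_filter, Finset.mem_sdiff] at hxD
        exact hxD.1.2 hxG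
      simp only [CJSA, Finset.mem_union, hG', hres]
      by_cases hDq : I.qR c ≤ D0.card
      · refine iff_of_false ?_ (by omega)
        have hcardR : (I.maxSet c D0 (I.qR c)).card = I.qR c := by
          rw [card_maxSet]
          omega
        have hdisj : Disjoint G (I.maxSet c D0 (I.qR c)) :=
          hdisjD.mono_right (maxSet_subset _ _ _ _)
        have hq0 : I.q c - (G ∪ I.maxSet c D0 (I.qR c)).card = 0 := by
          rw [Finset.card_union_of_disjoint hdisj, hGcard, hcardR]
          omega
        rintro ((h | h) | h)
        · exact hsG h
        · exact hsR' h
        · rw [hq0, maxSet_zero] at h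
          exact absurd h (Finset.notMem_empty s)
      · push_neg at hDq
        have hR' : I.maxSet c D0 (I.qR c) = D0 := maxSet_eq_self (le_of_lt hDq)
        have hbase2 : insert s T \ (G ∪ D0) = insert s ((T \ G).filter fun t => t ∉ I.dis) := by
          ext t
          simp only [Finset.mem_sdiff, Finset.mem_union, Finset.mem_insert, hD0def,
            Finset.mem_filter]
          constructor
          · rintro ⟨h1 | h1, h2⟩
            · exact Or.inl h1
            · have hg : t ∉ G := fun h => h2 (Or.inl h)
              exact Or.inr ⟨⟨h1, hg⟩, fun h => h2 (Or.inr ⟨⟨h1, hg⟩, h⟩)⟩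
          · rintro (rfl | ⟨⟨h1, h3⟩, h2⟩)
            · refine ⟨Or.inl rfl, ?_⟩
              rintro (h | h)
              · exact hsG h
              · exact hsT h.1.1
            · refine ⟨Or.inr h1, ?_⟩
              rintro (h | h)
              · exact h3 h
              · exact h2 h.2
        have hucard : (G ∪ D0).card = qG + D0.card := by
          rw [Finset.card_union_of_disjoint hdisjD, hGcard]
        rw [hR', hbase2, hucard]
        constructor
        · rintro ((h | h) | h)
          · exact absurd h hsG
          · exact absurd h hsD0
          · rw [mem_maxSet, Finset.filter_insert, if_neg (lt_irrefl _)] at h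
            have h2 := h.2
            omega
        · rintro (h | h)
          · omega
          · refine Or.inr ?_
            rw [mem_maxSet, Finset.filter_insert, if_neg (lt_irrefl _)]
            exact ⟨Finset.mem_insert_self _ _, by omega⟩

lemma jsaAux_pref_def (I : SchoolChoice S C) : I.jsaAux.pref = I.prefJSAAux := rfl

lemma jsaAux_acceptable_inl (I : SchoolChoice S C) (s : S) (c : C) :
    I.jsaAux.acceptable s (Sum.inl c) ↔ I.acceptable s c := by
  show I.prefJSAAux s (some (Sum.inl c)) < I.prefJSAAux s none ↔ _
  simp only [prefJSAAux, acceptable]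
  omega

lemma jsaAux_acceptable_inr (I : SchoolChoice S C) (s : S) (c : C) :
    I.jsaAux.acceptable s (Sum.inr c) ↔ I.acceptable s c := by
  show I.prefJSAAux s (some (Sum.inr c)) < I.prefJSAAux s none ↔ _
  simp only [prefJSAAux, acceptable]
  omega

lemma lt_psiInv_inl {I : SchoolChoice S C} {μ1 : S → Option C} {s : S} {c : C}
    (hne : μ1 s ≠ some c) :
    I.prefJSAAux s (some (Sum.inl c)) < I.prefJSAAux s (I.psiInv μ1 s)
      ↔ I.pref s (some c) < I.pref s (μ1 s) := by
  rcases hμ : μ1 s with _ | c0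
  · rw [psiInv_none hμ]
    simp only [prefJSAAux]
    omega
  · have hcc : c ≠ c0 := fun h => hne (by rw [hμ, h])
    have hne' : I.pref s (some c) ≠ I.pref s (some c0) := fun h =>
      hcc (Option.some.inj (I.pref_inj s h))
    rw [psiInv_some hμ]
    split_ifs <;> simp only [prefJSAAux] <;> omega

lemma lt_psiInv_inr {I : SchoolChoice S C} {μ1 : S → Option C} {s : S} {c : C}
    (hne : μ1 s ≠ some c) :
    I.prefJSAAux s (some (Sum.inr c)) < I.prefJSAAux s (I.psiInv μ1 s)
      ↔ I.pref s (some c) < I.pref s (μ1 s) := by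
  rcases hμ : μ1 s with _ | c0
  · rw [psiInv_none hμ]
    simp only [prefJSAAux]
    omega
  · have hcc : c ≠ c0 := fun h => hne (by rw [hμ, h])
    have hne' : I.pref s (some c) ≠ I.pref s (some c0) := fun h =>
      hcc (Option.some.inj (I.pref_inj s h))
    rw [psiInv_some hμ]
    split_ifs <;> simp only [prefJSAAux] <;> omega

lemma psiInv_isMatching (I : SchoolChoice S C) (μ1 : S → Option C)
    (hm : I.IsMatching μ1) : I.jsaAux.IsMatching (I.psiInv μ1) := by
  constructor
  · intro s d hd
    rcases hμ : μ1 s with _ | c0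
    · rw [psiInv_none hμ] at hd
      exact absurd hd (by simp)
    · have haccI : I.acceptable s c0 := hm.1 s c0 hμ
      rw [psiInv_some hμ] at hd
      split_ifs at hd
      · obtain rfl : d = Sum.inl c0 := Option.some.inj hd.symm
        exact (jsaAux_acceptable_inl I s c0).mpr haccI
      · obtain rfl : d = Sum.inr c0 := Option.some.inj hd.symm
        exact (jsaAux_acceptable_inr I s c0).mpr haccI
  · intro d
    cases d with
    | inl c =>
      rw [assigned_psiInv_inl]
      show _ ≤ I.q c - I.qR c
      rw [card_maxSet]
      exact min_le_left _ _
    | inr c =>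
      rw [assigned_psiInv_inr]
      show _ ≤ I.qR c
      rw [Finset.card_sdiff_of_subset (maxSet_subset _ _ _ _), card_maxSet]
      have h1 := hm.2 c
      have h2 := I.qR_le c
      omega

end SchoolChoice

/-- a matching μ1 of the original instance is stable under the JSA choice
functions iff ψ⁻¹(μ1) is stable in the JSA auxiliary instance. -/
theorem JSA_psiInv_stable_iff {S C : Type*} [Fintype S] [DecidableEq S] [Fintype C] [DecidableEq C]
    (I : SchoolChoice S C) (μ1 : S → Option C) (hm : I.IsMatching μ1) :
    I.IsStable I.CJSA μ1 ↔ I.jsaAux.IsStable I.jsaAux.CBASE (I.psiInv μ1) := by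
  open SchoolChoice in
  constructor
  · rintro ⟨-, hnb⟩
    refine ⟨psiInv_isMatching I μ1 hm, ?_⟩
    intro s d hacc hlt
    cases d with
    | inl c =>
      have haccI : I.acceptable s c := (jsaAux_acceptable_inl I s c).mp hacc
      by_cases hμc : μ1 s = some c
      · by_cases hmem0 : s ∈ I.maxSet c (I.assigned μ1 c) (I.q c - I.qR c)
        · exfalso
          rw [psiInv_some hμc, if_pos hmem0] at hlt
          exact lt_irrefl _ hlt
        · rw [assigned_psiInv_inl]
          exact not_mem_maxSet_insert_self (mem_assigned.mpr hμc) hmem0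
      · have hltI : I.pref s (some c) < I.pref s (μ1 s) := (lt_psiInv_inl hμc).mp hlt
        intro hmem
        exact hnb s c haccI hltI
          ((blocking_equiv I μ1 hm (fun h => hμc (mem_assigned.mp h))).mpr (Or.inl hmem))
    | inr c =>
      have haccI : I.acceptable s c := (jsaAux_acceptable_inr I s c).mp hacc
      by_cases hμc : μ1 s = some c
      · exfalso
        rw [psiInv_some hμc] at hlt
        rw [jsaAux_pref_def] at hlt
        split_ifs at hlt <;> simp only [prefJSAAux] at hlt <;> omega
      · have hltI : I.pref s (some c) < I.pref s (μ1 s) := (lt_psiInv_inr hμc).mp hlt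
        intro hmem
        exact hnb s c haccI hltI
          ((blocking_equiv I μ1 hm (fun h => hμc (mem_assigned.mp h))).mpr (Or.inr hmem))
  · rintro ⟨-, hnbA⟩
    refine ⟨hm, fun s c haccI hltI hmem => ?_⟩
    have hμc : μ1 s ≠ some c := fun h => by rw [h] at hltI; exact lt_irrefl _ hltI
    have hs : s ∉ I.assigned μ1 c := fun h => hμc (mem_assigned.mp h)
    rcases (blocking_equiv I μ1 hm hs).mp hmem with h | h
    · exact hnbA s (Sum.inl c) ((jsaAux_acceptable_inl I s c).mpr haccI)
        ((lt_psiInv_inl hμc).mpr hltI) h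
    · exact hnbA s (Sum.inr c) ((jsaAux_acceptable_inr I s c).mpr haccI)
        ((lt_psiInv_inr hμc).mpr hltI) h
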